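/- Let b, c be integers with 2 ≤ b ≤ c. The cyclic triple (2, b, c) is mutation-cyclic if and only if b = c. -/

import Mathlib

/-- One mutation step on a triple of integers: replace one entry `x` by
(product of the other two) − `x`. -/
def mutStep (t s : ℤ × ℤ × ℤ) : Prop :=
  s = (t.1, t.2.1, t.1 * t.2.1 - t.2.2) ∨
  s = (t.1, t.1 * t.2.2 - t.2.1, t.2.2) ∨
  s = (t.2.1 * t.2.2 - t.1, t.2.1, t.2.2)

/-- A triple is mutation-acyclic if some finite sequence of mutations
reaches a triple with a nonpositive entry (an acyclic quiver). -/
def MutationAcyclic (t : ℤ × ℤ × ℤ) : Prop :=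
  ∃ s, Relation.ReflTransGen mutStep t s ∧ (s.1 ≤ 0 ∨ s.2.1 ≤ 0 ∨ s.2.2 ≤ 0)

/-- A triple is mutation-cyclic if every quiver in its mutation class is cyclic. -/
def MutationCyclic (t : ℤ × ℤ × ℤ) : Prop := ¬ MutationAcyclic t

/-- Key algebraic lemma: if all entries are ≥ 2 and the Markov-type invariant
equals 4, then the mutated entry is again ≥ 2. -/
lemma mutKey (x y z : ℤ) (hx : 2 ≤ x) (hy : 2 ≤ y) (hz : 2 ≤ z)
    (hQ : x^2 + y^2 + z^2 - x*y*z = 4) : 2 ≤ x*y - z := by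
  have hzz : (x*y - z) * z = x^2 + y^2 - 4 := by linear_combination -hQ
  have hpos : 0 < x*y - z := by
    rcases le_or_gt (x*y - z) 0 with h | h
    · exfalso; nlinarith
    · exact h
  rcases eq_or_lt_of_le (Int.lt_iff_add_one_le.mp hpos) with h | h
  · exfalso
    have hz' : z = x*y - 1 := by omega
    subst hz'
    have h3 : x^2 + y^2 - x*y = 3 := by linear_combination hQ
    have hxy : 4 ≤ x*y := by nlinarith
    nlinarith [sq_nonneg (x - y)]
  · omega

/-- The invariant: all entries at least 2 and Markov-type quantity equal to 4. -/
def MutInv (t : ℤ × ℤ × ℤ) : Prop :=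
  2 ≤ t.1 ∧ 2 ≤ t.2.1 ∧ 2 ≤ t.2.2 ∧
  t.1^2 + t.2.1^2 + t.2.2^2 - t.1 * t.2.1 * t.2.2 = 4

lemma mutInv_step {t s : ℤ × ℤ × ℤ} (h : mutStep t s) (ht : MutInv t) : MutInv s := by
  obtain ⟨x, y, z⟩ := t
  obtain ⟨hx, hy, hz, hQ⟩ := ht
  simp only [MutInv] at *
  rcases h with h | h | h <;> subst h
  · exact ⟨hx, hy, mutKey x y z hx hy hz hQ, by linear_combination hQ⟩
  · refine ⟨hx, ?_, hz, by linear_combination hQ⟩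
    have := mutKey x z y hx hz hy (by linear_combination hQ)
    exact this
  · refine ⟨?_, hy, hz, by linear_combination hQ⟩
    have := mutKey y z x hy hz hx (by linear_combination hQ)
    exact this

lemma mutInv_reach {t s : ℤ × ℤ × ℤ} (h : Relation.ReflTransGen mutStep t s)
    (ht : MutInv t) : MutInv s := by
  induction h with
  | refl => exact ht
  | tail _ hstep ih => exact mutInv_step hstep ih

lemma acyclic_of_lt : ∀ n : ℕ, ∀ y z : ℤ, y < z → y + z ≤ n → MutationAcyclic (2, y, z) := by
  intro n
  induction n using Nat.strong_induction_on with
  | _ n ih =>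
    intro y z hyz hsum
    rcases le_or_gt y 0 with hy | hy
    · exact ⟨(2, y, z), Relation.ReflTransGen.refl, Or.inr (Or.inl hy)⟩
    · have step1 : mutStep (2, y, z) (2, y, 2*y - z) := Or.inl rfl
      rcases le_or_gt (2*y - z) 0 with hz0 | hz0
      · exact ⟨(2, y, 2*y - z), Relation.ReflTransGen.single step1, Or.inr (Or.inr hz0)⟩
      · have step2 : mutStep (2, y, 2*y - z) (2, 2*(2*y - z) - y, 2*y - z) :=
          Or.inr (Or.inl rfl)
        have hn : n ≠ 0 := by omega
        obtain ⟨s, hreach, hneg⟩ := ih (n - 1) (by omega) (2*(2*y - z) - y) (2*y - z)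
          (by omega) (by omega)
        exact ⟨s, Relation.ReflTransGen.trans (Relation.ReflTransGen.single step1)
          (Relation.ReflTransGen.trans (Relation.ReflTransGen.single step2) hreach), hneg⟩

theorem stmt_8 (b c : ℤ) (hb : 2 ≤ b) (hbc : b ≤ c) :
    MutationCyclic (2, b, c) ↔ b = c := by
  constructor
  · intro h
    by_contra hne
    exact h (acyclic_of_lt (b + c).toNat b c (lt_of_le_of_ne hbc hne) (by omega))
  · intro h
    subst h
    rintro ⟨s, hreach, hneg⟩
    have hinv := mutInv_reach hreach ⟨by norm_num, hb, hb, by ring⟩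
    obtain ⟨h1, h2, h3, -⟩ := hinv
    rcases hneg with h | h | h <;> linarith
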